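/- (Euclidean tail bound for the discrete Gaussian) For every integer n ≥ 1, every real R > 0, and every u ≥ 0, the discrete Gaussian γ_R on ℤⁿ satisfies γ_R({x ∈ ℤⁿ : ‖x‖₂ > u}) ≤ (√2)ⁿ · exp(−π·u²/(2R²)). -/

import Mathlib

open scoped BigOperators

noncomputable section

/-- Euclidean norm of a real vector. -/
def l2 {m : ℕ} (x : Fin m → ℝ) : ℝ := Real.sqrt (∑ i, x i ^ 2)

/-- Euclidean norm of an integer vector. -/
def l2Z {m : ℕ} (x : Fin m → ℤ) : ℝ := l2 (fun i => (x i : ℝ))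

/-- The torus norm: distance from a representative `ζ` of a point of
`𝕋ⁿ = (ℝ/ℤ)ⁿ` to the nearest point of the integer lattice `ℤⁿ`. -/
def tnorm {m : ℕ} (ζ : Fin m → ℝ) : ℝ := ⨅ z : Fin m → ℤ, l2 (fun i => ζ i - z i)

/-- The discrete Gaussian probability mass function of radius `R` on `ℤⁿ`:
`γ_R(x) = exp(-π‖x‖²/R²) / ∑_y exp(-π‖y‖²/R²)`. -/
def dgauss (n : ℕ) (R : ℝ) (x : Fin n → ℤ) : ℝ :=
  Real.exp (-Real.pi * l2Z x ^ 2 / R ^ 2) /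
    ∑' y : Fin n → ℤ, Real.exp (-Real.pi * l2Z y ^ 2 / R ^ 2)

/-- `μ` is a probability mass function on `ℤⁿ`. -/
def IsPMF {n : ℕ} (μ : (Fin n → ℤ) → ℝ) : Prop := (∀ x, 0 ≤ μ x) ∧ HasSum μ 1

/-- The pairing `⟨ζ, x⟩ = ∑ i, ζ i * x i` of a torus representative and a lattice point. -/
def pair {n : ℕ} (ζ : Fin n → ℝ) (x : Fin n → ℤ) : ℝ := ∑ i, ζ i * (x i : ℝ)

/-- The Fourier transform `μ̂(ζ) = ∑ₓ μ(x)·exp(-2πi⟨ζ,x⟩)` of `μ : ℤⁿ → ℝ`,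
evaluated at a representative of a torus point. -/
def ft {n : ℕ} (μ : (Fin n → ℤ) → ℝ) (ζ : Fin n → ℝ) : ℂ :=
  ∑' x : Fin n → ℤ, (μ x : ℂ) * Complex.exp (-(2 * (Real.pi : ℂ) * Complex.I) * (pair ζ x : ℂ))

section DGTailAux
open Real

lemma mySummable {b : ℝ} (hb : 0 < b) :
    Summable fun n : ℤ => Real.exp (-π * b * (n : ℝ) ^ 2) := by
  have key : ∀ (g : ℕ → ℤ), (∀ m : ℕ, (m : ℝ) ≤ |(g m : ℝ)|) →
      Summable fun m : ℕ => Real.exp (-π * b * ((g m : ℤ) : ℝ) ^ 2) := by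
    intro g hg
    refine Summable.of_nonneg_of_le (fun m => (Real.exp_pos _).le)
      (f := fun m : ℕ => Real.exp (-π * b) ^ m) (fun m => ?_) ?_
    · show rexp (-π * b * ((g m : ℤ) : ℝ) ^ 2) ≤ rexp (-π * b) ^ m
      rw [← Real.exp_nat_mul]
      apply Real.exp_le_exp.mpr
      have h1 : (m : ℝ) ≤ ((g m : ℝ)) ^ 2 := by
        have h2 : (m:ℝ) ≤ (m:ℝ)^2 := by exact_mod_cast Nat.le_self_pow two_ne_zero m
        have h3 : ((m:ℝ))^2 ≤ |(g m : ℝ)|^2 :=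
          pow_le_pow_left₀ (Nat.cast_nonneg m) (hg m) 2
        rw [sq_abs] at h3
        linarith
      nlinarith [mul_nonneg (mul_nonneg pi_pos.le hb.le) (sub_nonneg.2 h1)]
    · exact summable_geometric_of_lt_one (Real.exp_pos _).le
        (Real.exp_lt_one_iff.mpr (by nlinarith [pi_pos]))
  apply Summable.of_nat_of_neg
  · exact key (fun m => (m : ℤ)) (by intro m; push_cast; simp [abs_of_nonneg (Nat.cast_nonneg (α := ℝ) m)])
  · exact key (fun m => -(m : ℤ)) (by intro m; push_cast; simp [abs_of_nonneg (Nat.cast_nonneg (α := ℝ) m)])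

lemma myMono {b c : ℝ} (hb : 0 < b) (hbc : b ≤ c) :
    (∑' n : ℤ, Real.exp (-π * c * (n : ℝ) ^ 2)) ≤ ∑' n : ℤ, Real.exp (-π * b * (n : ℝ) ^ 2) := by
  apply Summable.tsum_le_tsum _ (mySummable (lt_of_lt_of_le hb hbc)) (mySummable hb)
  intro n
  apply Real.exp_le_exp.mpr
  nlinarith [pi_pos, sq_nonneg ((n:ℝ)), mul_nonneg (sub_nonneg.2 hbc) (sq_nonneg (n:ℝ))]

lemma myKey {b : ℝ} (hb : 0 < b) :
    (∑' n : ℤ, Real.exp (-π * (b/2) * (n : ℝ) ^ 2))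
      ≤ Real.sqrt 2 * ∑' n : ℤ, Real.exp (-π * b * (n : ℝ) ^ 2) := by
  rw [Real.tsum_exp_neg_mul_int_sq (half_pos hb), Real.tsum_exp_neg_mul_int_sq hb,
    ← Real.sqrt_eq_rpow, ← Real.sqrt_eq_rpow, Real.sqrt_div' b (by norm_num)]
  have hsb : 0 < Real.sqrt b := Real.sqrt_pos.mpr hb
  have hs2 : 0 < Real.sqrt 2 := Real.sqrt_pos.mpr (by norm_num)
  have hmono : (∑' n : ℤ, Real.exp (-π / (b/2) * (n : ℝ) ^ 2))
      ≤ ∑' n : ℤ, Real.exp (-π / b * (n : ℝ) ^ 2) := by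
    have e1 : ∀ n : ℤ, Real.exp (-π / (b/2) * (n:ℝ)^2) = Real.exp (-π * (2/b) * (n:ℝ)^2) := by
      intro n; congr 1; field_simp
    have e2 : ∀ n : ℤ, Real.exp (-π / b * (n:ℝ)^2) = Real.exp (-π * (1/b) * (n:ℝ)^2) := by
      intro n; congr 1; ring
    simp only [e1, e2]
    exact myMono (by positivity) (by rw [div_le_div_iff₀ hb hb]; nlinarith)
  calc 1 / (Real.sqrt b / Real.sqrt 2) * ∑' n : ℤ, Real.exp (-π / (b/2) * (n : ℝ) ^ 2)
      = Real.sqrt 2 * (1 / Real.sqrt b * ∑' n : ℤ, Real.exp (-π / (b/2) * (n : ℝ) ^ 2)) := by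
        field_simp
    _ ≤ Real.sqrt 2 * (1 / Real.sqrt b * ∑' n : ℤ, Real.exp (-π / b * (n : ℝ) ^ 2)) := by
        exact mul_le_mul_of_nonneg_left
          (mul_le_mul_of_nonneg_left hmono (by positivity)) hs2.le

lemma myPos {b : ℝ} (hb : 0 < b) : 0 < ∑' n : ℤ, Real.exp (-π * b * (n : ℝ) ^ 2) :=
  Summable.tsum_pos (mySummable hb) (fun n => (Real.exp_pos _).le) 0 (Real.exp_pos _)

lemma myProd (f : ℤ → ℝ) (h0 : ∀ k, 0 ≤ f k) (hf : Summable f) (n : ℕ) :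
    HasSum (fun x : Fin n → ℤ => ∏ i, f (x i)) ((∑' k, f k) ^ n) := by
  induction n with
  | zero =>
      simp only [Finset.univ_eq_empty, Finset.prod_empty, pow_zero]
      exact hasSum_single default fun b hb => absurd (Subsingleton.elim b default) hb
  | succ m ih =>
      have hfn : Summable fun k => ‖f k‖ :=
        hf.congr fun k => by rw [Real.norm_eq_abs, abs_of_nonneg (h0 k)]
      have hprod0 : ∀ x : Fin m → ℤ, 0 ≤ ∏ i, f (x i) :=
        fun x => Finset.prod_nonneg (fun i _ => h0 _)
      obtain ⟨F, hF⟩ : ∃ F : (Fin m → ℤ) → ℝ, F = fun x => ∏ i, f (x i) := ⟨_, rfl⟩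
      rw [← hF] at ih
      have hFn : Summable fun x : Fin m → ℤ => ‖F x‖ :=
        ih.summable.congr fun x => by
          rw [Real.norm_eq_abs, abs_of_nonneg (by rw [hF]; exact hprod0 x)]
      have hmul := hf.hasSum.mul ih (summable_mul_of_summable_norm hfn hFn)
      simp only [hF] at hmul
      rw [pow_succ, mul_comm]
      have := (Fin.consEquiv (fun _ : Fin (m+1) => ℤ)).hasSum_iff
        (f := fun x : Fin (m+1) → ℤ => ∏ i, f (x i)) (a := (∑' k, f k) * (∑' k, f k) ^ m)
      apply this.mp
      convert hmul using 1
      · rfl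
      funext p
      simp [Fin.consEquiv, Fin.prod_univ_succ]

end DGTailAux

open Real in
/-- **Euclidean tail bound for the discrete Gaussian** (equation (4.1)):
`γ_R({x : ‖x‖₂ > u}) ≤ (√2)ⁿ · exp(-πu²/(2R²))`. -/
theorem discrete_gaussian_tail
    (n : ℕ) (hn : 1 ≤ n) (R : ℝ) (hR : 0 < R) (u : ℝ) (hu : 0 ≤ u) :
    (∑' x : Fin n → ℤ, if u < l2Z x then dgauss n R x else 0)
      ≤ Real.sqrt 2 ^ n * Real.exp (-Real.pi * u ^ 2 / (2 * R ^ 2)) := by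
  have hR2 : (0:ℝ) < R ^ 2 := by positivity
  set b : ℝ := 1 / R ^ 2 with hbdef
  have hb : 0 < b := by positivity
  have hb2 : 0 < b / 2 := by positivity
  -- single-variable Gaussian functions
  set f1 : ℤ → ℝ := fun k => Real.exp (-π * b * (k : ℝ) ^ 2) with hf1def
  set f2 : ℤ → ℝ := fun k => Real.exp (-π * (b/2) * (k : ℝ) ^ 2) with hf2def
  set S1 : ℝ := ∑' k : ℤ, f1 k with hS1def
  set S2 : ℝ := ∑' k : ℤ, f2 k with hS2def
  have hS1pos : 0 < S1 := myPos hb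
  have hS2pos : 0 < S2 := myPos hb2
  have hl2sq : ∀ x : Fin n → ℤ, l2Z x ^ 2 = ∑ i, ((x i : ℝ)) ^ 2 := by
    intro x
    simp only [l2Z, l2]
    exact Real.sq_sqrt (Finset.sum_nonneg fun i _ => sq_nonneg _)
  have hl2nonneg : ∀ x : Fin n → ℤ, 0 ≤ l2Z x := fun x => Real.sqrt_nonneg _
  have hprodeq : ∀ (c : ℝ) (x : Fin n → ℤ),
      Real.exp (-π * c * l2Z x ^ 2) = ∏ i, Real.exp (-π * c * (x i : ℝ) ^ 2) := by
    intro c x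
    rw [← Real.exp_sum]
    congr 1
    rw [hl2sq x, ← Finset.mul_sum]
  have hexp1 : ∀ x : Fin n → ℤ,
      Real.exp (-π * l2Z x ^ 2 / R ^ 2) = ∏ i, f1 (x i) := by
    intro x
    rw [← hprodeq b x]
    congr 1
    rw [hbdef]
    field_simp
  have hZ : (∑' y : Fin n → ℤ, Real.exp (-π * l2Z y ^ 2 / R ^ 2)) = S1 ^ n := by
    rw [tsum_congr hexp1]
    exact (myProd f1 (fun k => (Real.exp_pos _).le) (mySummable hb) n).tsum_eq
  set c0 : ℝ := Real.exp (-π * (b/2) * u ^ 2) / S1 ^ n with hc0def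
  have hc0pos : 0 < c0 := by positivity
  have hf2sum := myProd f2 (fun k => (Real.exp_pos _).le) (mySummable hb2) n
  have hg : Summable fun x : Fin n → ℤ => c0 * ∏ i, f2 (x i) := hf2sum.summable.mul_left c0
  have hpt : ∀ x : Fin n → ℤ,
      (if u < l2Z x then dgauss n R x else 0) ≤ c0 * ∏ i, f2 (x i) := by
    intro x
    have hprodpos : 0 < ∏ i, f2 (x i) := Finset.prod_pos fun i _ => Real.exp_pos _
    by_cases h : u < l2Z x
    · rw [if_pos h]
      unfold dgauss
      rw [hZ, hexp1 x, ← hprodeq b x]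
      have key : Real.exp (-π * b * l2Z x ^ 2)
          ≤ Real.exp (-π * (b/2) * u ^ 2) * ∏ i, f2 (x i) := by
        rw [← hprodeq (b/2) x, ← Real.exp_add]
        apply Real.exp_le_exp.mpr
        have husq : u ^ 2 ≤ l2Z x ^ 2 := by nlinarith [hl2nonneg x]
        nlinarith [mul_nonneg (mul_nonneg pi_pos.le hb2.le) (sub_nonneg.2 husq)]
      rw [hc0def, div_mul_eq_mul_div]
      exact div_le_div_of_nonneg_right key (by positivity) |>.trans_eq rfl
    · rw [if_neg h]
      positivity
  have hlhs_sum : Summable fun x : Fin n → ℤ => if u < l2Z x then dgauss n R x else 0 := by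
    apply Summable.of_nonneg_of_le _ hpt hg
    intro x
    by_cases h : u < l2Z x
    · rw [if_pos h]
      unfold dgauss
      apply div_nonneg (Real.exp_pos _).le
      exact tsum_nonneg fun y => (Real.exp_pos _).le
    · rw [if_neg h]
  calc (∑' x : Fin n → ℤ, if u < l2Z x then dgauss n R x else 0)
      ≤ ∑' x : Fin n → ℤ, c0 * ∏ i, f2 (x i) := Summable.tsum_le_tsum hpt hlhs_sum hg
    _ = c0 * S2 ^ n := by rw [tsum_mul_left, hf2sum.tsum_eq]
    _ ≤ c0 * (Real.sqrt 2 ^ n * S1 ^ n) := by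
        apply mul_le_mul_of_nonneg_left _ hc0pos.le
        rw [← mul_pow]
        exact pow_le_pow_left₀ hS2pos.le (myKey hb) n
    _ = Real.sqrt 2 ^ n * Real.exp (-π * u ^ 2 / (2 * R ^ 2)) := by
        rw [hc0def]
        have : Real.exp (-π * (b/2) * u ^ 2) = Real.exp (-π * u ^ 2 / (2 * R ^ 2)) := by
          congr 1
          rw [hbdef]
          ring
        rw [this]
        field_simp
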